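/- The function g : ℝ → ℝ defined by g(x) = σ(x²)·(1 − σ(x²))·x, where σ(x) = 1/(1+exp(−x)) is the sigmoid function, is strictly decreasing on the interval (2, ∞). -/

import Mathlib

noncomputable def sigmoid (x : ℝ) : ℝ := 1 / (1 + Real.exp (-x))

noncomputable def gfun (x : ℝ) : ℝ := x * Real.exp (-x ^ 2) / (1 + Real.exp (-x ^ 2)) ^ 2

lemma hasDerivAt_gfun (x : ℝ) :
    HasDerivAt gfun
      (((Real.exp (-x ^ 2) + x * (Real.exp (-x ^ 2) * (-(2 * x)))) * (1 + Real.exp (-x ^ 2)) ^ 2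
        - x * Real.exp (-x ^ 2) *
          (2 * (1 + Real.exp (-x ^ 2)) ^ 1 * (Real.exp (-x ^ 2) * (-(2 * x)))))
        / ((1 + Real.exp (-x ^ 2)) ^ 2) ^ 2) x := by
  have hE : HasDerivAt (fun x : ℝ => Real.exp (-x ^ 2)) (Real.exp (-x ^ 2) * (-(2 * x))) x := by
    have h1 : HasDerivAt (fun x : ℝ => -x ^ 2) (-(2 * x)) x := by
      have := (hasDerivAt_pow 2 x).fun_neg
      simpa using this
    exact h1.exp
  have hnum : HasDerivAt (fun x : ℝ => x * Real.exp (-x ^ 2))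
      (1 * Real.exp (-x ^ 2) + x * (Real.exp (-x ^ 2) * (-(2 * x)))) x :=
    (hasDerivAt_id x).mul hE
  have hden : HasDerivAt (fun x : ℝ => (1 + Real.exp (-x ^ 2)) ^ 2)
      (2 * (1 + Real.exp (-x ^ 2)) ^ 1 * (Real.exp (-x ^ 2) * (-(2 * x)))) x := by
    have := ((hasDerivAt_const x (1 : ℝ)).fun_add hE).fun_pow 2
    simpa using this
  have hd0 : ((1 + Real.exp (-x ^ 2)) ^ 2) ≠ 0 := by positivity
  have := hnum.fun_div hden hd0
  delta gfun
  simpa using this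

lemma deriv_gfun_neg {x : ℝ} (hx : 2 < x) : deriv gfun x < 0 := by
  rw [(hasDerivAt_gfun x).deriv]
  set E := Real.exp (-x ^ 2) with hEdef
  have hE0 : 0 < E := Real.exp_pos _
  have hElt : E < 1 / 8 := by
    have h4 : Real.exp (-x ^ 2) < Real.exp (-4) := by
      apply Real.exp_lt_exp.mpr
      nlinarith
    have : Real.exp (-4) < 1 / 8 := by
      rw [Real.exp_neg]
      rw [inv_lt_comm₀ (Real.exp_pos _) (by norm_num)]
      have h24 : Real.exp 4 = Real.exp 2 * Real.exp 2 := by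
        rw [← Real.exp_add]; norm_num
      nlinarith [Real.add_one_le_exp (2 : ℝ), Real.exp_pos (2 : ℝ)]
    linarith
  have hD : 0 < 1 + E := by linarith
  have hx2 : 4 < x ^ 2 := by nlinarith
  apply div_neg_of_neg_of_pos
  · have hbr : 1 + E + 2 * x ^ 2 * (E - 1) < 0 := by
      nlinarith [mul_pos (by linarith : (0:ℝ) < x ^ 2 - 4) (by linarith : (0:ℝ) < 1 - E)]
    have hfact : (E + x * (E * -(2 * x))) * (1 + E) ^ 2
        - x * E * (2 * (1 + E) ^ 1 * (E * -(2 * x)))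
        = E * (1 + E) * (1 + E + 2 * x ^ 2 * (E - 1)) := by ring
    rw [hfact]
    exact mul_neg_of_pos_of_neg (by positivity) hbr
  · positivity

theorem g_strict_anti :
    StrictAntiOn (fun x : ℝ => sigmoid (x ^ 2) * (1 - sigmoid (x ^ 2)) * x)
      (Set.Ioi 2) := by
  have heq : (fun x : ℝ => sigmoid (x ^ 2) * (1 - sigmoid (x ^ 2)) * x) = gfun := by
    funext x
    have hD : (1 + Real.exp (-x ^ 2)) ≠ 0 := by positivity
    simp only [sigmoid, gfun]
    field_simp
    ring
  rw [heq]
  have hdiff : ∀ x : ℝ, DifferentiableAt ℝ gfun x := fun x =>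
    (hasDerivAt_gfun x).differentiableAt
  apply strictAntiOn_of_deriv_neg (convex_Ioi 2)
  · exact fun x _ => (hdiff x).continuousAt.continuousWithinAt
  · intro x hx
    rw [interior_Ioi] at hx
    exact deriv_gfun_neg hx
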